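/- arXiv:1301.6441 — 3 statements merged into one kernel-verified Lean document; each statement's English description precedes it below -/
import Mathlib

section
/- Let b ≥ 2 be an integer and α, d, s ∈ ℕ. Let ∅ ≠ u ⊆ {1,...,ds} and for each j ∈ u let l_j ≥ 1 be an integer. For 1 ≤ i ≤ s set u_i = u ∩ {(i-1)d+1,...,id}, let v(u) = {i : u_i ≠ ∅}, and α_i = min(α, |u_i|). For j ∈ u_i define β'_j = (b-1) b^{-(j-(i-1)d) - (l_j - 1)d}; these values are pairwise distinct within each block, and for each i ∈ v(u) let β_{i,1} < β_{i,2} < ⋯ < β_{i,|u_i|} be the elements of {β'_j : j ∈ u_i} listed in increasing order. Define β(l_u, 0) = Π_{i∈v(u)} Π_{j=1}^{α_i} β_{i,j}. Then β(l_u, 0) ≤ Π_{j∈u} b^{-min(α,d)(l_j - 1)}. -/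
open scoped Classical
open Polynomial

noncomputable section

namespace ISPLR

/-- `digit b k i` is the `i`-th base-`b` digit of `k`. -/
def digit (b k i : ℕ) : ℕ := k / b ^ i % b

/-- `trunc b m k` is the truncated polynomial `tr_m(k) ∈ F_b[x]`. -/
def trunc (b m k : ℕ) : Polynomial (ZMod b) :=
  ∑ i ∈ Finset.range m, Polynomial.C ((digit b k i : ZMod b)) * Polynomial.X ^ i

/-- `mu b k = ⌊log_b k⌋` for `k ≥ 1`. -/
def mu (b k : ℕ) : ℕ := Nat.log b k

/-- `r_{α,d}(k)`. -/
def rfun (b α d k : ℕ) : ℝ :=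
  if k = 0 then 1 else (b : ℝ) ^ (-(((2 * min α d + 1) * mu b k : ℕ) : ℤ))

/-- `blk d u = v(u)`: the set of coordinates `i` whose block `{(i-1)d+1,...,id}` meets `u`. -/
def blk (d : ℕ) (u : Finset ℕ) : Finset ℕ := u.image fun j => (j - 1) / d + 1

/-- The quality criterion `B_{α,d,γ}((q_1,...,q_τ), p)`. -/
def Bcrit (b α d m : ℕ) (γ : Finset ℕ → ℝ) (p : Polynomial (ZMod b))
    (τ : ℕ) (q : ℕ → Polynomial (ZMod b)) : ℝ :=
  ∑ u ∈ (Finset.Icc 1 τ).powerset.filter fun u => u ≠ ∅,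
    (4 : ℝ) ^ ((blk d u).card * (d - α)) * γ (blk d u) *
      ∑' k : ↥u → ℕ,
        (if (∀ j, 1 ≤ k j) ∧ p ∣ ∑ j, trunc b m (k j) * q (j : ℕ)
         then ∏ j, rfun b α d (k j) else 0)

/-- Membership in `R_{b,m}`: nonzero polynomials of degree `< m`. -/
def Rbm (b m : ℕ) (q : Polynomial (ZMod b)) : Prop :=
  q ≠ 0 ∧ q.degree < (m : WithBot ℕ)

/-- `R_{b,m}` as a finset. -/
def Rfin (b m : ℕ) : Finset (Polynomial (ZMod b)) :=
  ((Finset.range (b ^ m)).filter fun n => n ≠ 0).image (trunc b m)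

/-- The CBC construction: `q 1 = 1`, every component lies in `R_{b,m}`, and each `q τ`
minimizes the quality criterion given the previous components. -/
def CBC (b α d m ds : ℕ) (γ : Finset ℕ → ℝ) (p : Polynomial (ZMod b))
    (q : ℕ → Polynomial (ZMod b)) : Prop :=
  q 1 = 1 ∧ (∀ τ, 1 ≤ τ → τ ≤ ds → Rbm b m (q τ)) ∧
    ∀ τ, 2 ≤ τ → τ ≤ ds → ∀ q' : Polynomial (ZMod b), Rbm b m q' →
      Bcrit b α d m γ p τ q ≤ Bcrit b α d m γ p τ (Function.update q τ q')

/-- `C̃_{α,d,λ}`. -/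
def Ctilde (b α d : ℕ) (lam : ℝ) : ℝ :=
  max ((((b : ℝ) - 1) / (1 - (b : ℝ) ^ (-(2 * ((min α d : ℕ) : ℤ))))) ^ lam)
      (((b : ℝ) - 1) / (1 - (b : ℝ) ^ ((1 : ℝ) - (2 * ((min α d : ℕ) : ℝ) + 1) * lam)))

/-- `C_{α,d,λ,a}`. -/
def Cconst (b α d : ℕ) (lam : ℝ) (a : ℕ) : ℝ :=
  (4 : ℝ) ^ (lam * ((d - α : ℕ) : ℝ)) * (-1 + (1 + Ctilde b α d lam) ^ a)

/-- `φ_{α,d}(z)`. -/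
def phi (b α d : ℕ) (z : ℝ) : ℝ :=
  if z = 0 then ((b : ℝ) - 1) / (1 - (b : ℝ) ^ (-(2 * ((min α d : ℕ) : ℤ))))
  else ((b : ℝ) - 1 - (b : ℝ) ^ (2 * ((min α d : ℕ) : ℤ) * ⌊Real.logb b z⌋) *
      ((b : ℝ) ^ (2 * min α d + 1) - 1)) /
    (1 - (b : ℝ) ^ (-(2 * ((min α d : ℕ) : ℤ))))

/-- The `l`-th coefficient `t_l` of the Laurent expansion `g/p = Σ_{l} t_l x^{-l}`
(for `l ≥ 1`; the coefficients with `l ≥ 1` only depend on `g % p`, and are obtained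
as power-series coefficients after the substitution `y = x^{-1}`). -/
def lcoeff (b : ℕ) [Fact (Nat.Prime b)] (m : ℕ) (p g : Polynomial (ZMod b)) (l : ℕ) : ZMod b :=
  PowerSeries.coeff (R := ZMod b) l
    (PowerSeries.X * (((g % p).reflect (m - 1) : Polynomial (ZMod b)) : PowerSeries (ZMod b)) *
      (((p.reflect m : Polynomial (ZMod b)) : PowerSeries (ZMod b)))⁻¹)

/-- `v_m(g/p) = Σ_{l=1}^m t_l b^{-l}`. -/
def vmap (b : ℕ) [Fact (Nat.Prime b)] (m : ℕ) (p g : Polynomial (ZMod b)) : ℝ :=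
  ∑ l ∈ Finset.Icc 1 m, ((lcoeff b m p g l).val : ℝ) / (b : ℝ) ^ l

/-- The `j`-th coordinate `z_{n,j} = v_m(n(x) q_j(x)/p(x))` of the `n`-th point of the
polynomial lattice point set with modulus `p` and generating polynomial `qj`. -/
def plp (b : ℕ) [Fact (Nat.Prime b)] (m : ℕ) (p qj : Polynomial (ZMod b)) (n : ℕ) : ℝ :=
  vmap b m p (trunc b m n * qj)

/-- The `i`-th base-`b` digit (for `i ≥ 1`) of a real number `x ∈ [0,1)`, taken from the
expansion in which infinitely many digits differ from `b - 1`. -/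
def rdigit (b : ℕ) (x : ℝ) (i : ℕ) : ℕ := (⌊x * (b : ℝ) ^ i⌋.toNat) % b

/-- The `k`-th base-`b` Walsh function. -/
def walsh (b k : ℕ) (x : ℝ) : ℂ :=
  Complex.exp (2 * (Real.pi : ℂ) * Complex.I *
    (((∑ a ∈ Finset.range (Nat.log b k + 1), rdigit b x (a + 1) * digit b k a : ℕ)) : ℂ) / (b : ℂ))

/-- `θ(q̃)`: the part of the quality criterion involving the new component `q̃` at index `τ+1`. -/
def theta (b α d m τ : ℕ) (γ : Finset ℕ → ℝ) (p : Polynomial (ZMod b))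
    (q : ℕ → Polynomial (ZMod b)) (qt : Polynomial (ZMod b)) : ℝ :=
  ∑ u ∈ (Finset.Icc 1 τ).powerset,
    (4 : ℝ) ^ ((blk d (insert (τ + 1) u)).card * (d - α)) * γ (blk d (insert (τ + 1) u)) *
      ∑' kk : (↥u → ℕ) × ℕ,
        (if (∀ j, 1 ≤ kk.1 j) ∧ 1 ≤ kk.2 ∧
            p ∣ ((∑ j, trunc b m (kk.1 j) * q (j : ℕ)) + trunc b m kk.2 * qt)
         then (∏ j, rfun b α d (kk.1 j)) * rfun b α d kk.2 else 0)

private lemma fin_le_apply {a n : ℕ} {g : Fin a → Fin n} (hg : StrictMono g) :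
    ∀ i : Fin a, (i : ℕ) ≤ (g i : ℕ) := by
  have H : ∀ k : ℕ, ∀ i : Fin a, (i : ℕ) ≤ k → (i : ℕ) ≤ (g i : ℕ) := by
    intro k
    induction k with
    | zero => intro i hi; omega
    | succ k ih =>
      intro i hi
      by_cases h : (i : ℕ) ≤ k
      · exact ih i h
      · have hik : (i : ℕ) = k + 1 := by omega
        have hk : k < a := by omega
        have hlt : (⟨k, hk⟩ : Fin a) < i := by
          simp only [Fin.lt_def, Fin.val_mk]; omega
        have h1 := hg hlt
        have h2 := ih ⟨k, hk⟩ le_rfl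
        simp only [Fin.lt_def, Fin.val_mk] at h1 h2
        omega
  exact fun i => H (i : ℕ) i le_rfl

private lemma take_prod_le {L L' : List ℝ} (hL : L.Pairwise (· ≤ ·)) (hsub : List.Sublist L' L)
    (hpos : ∀ x ∈ L, 0 ≤ x) : (L.take L'.length).prod ≤ L'.prod := by
  obtain ⟨f, hf⟩ := List.sublist_iff_exists_fin_orderEmbedding_get_eq.mp hsub
  have ha : L'.length ≤ L.length := hsub.length_le
  have h1 : L.take L'.length = List.ofFn (fun i : Fin L'.length => L.get (Fin.castLE ha i)) := by
    apply List.ext_get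
    · simp [Nat.min_eq_left ha]
    · intro n h₁ h₂
      simp only [List.get_eq_getElem, List.getElem_take, List.getElem_ofFn, Fin.coe_castLE]
  have h2 : L' = List.ofFn (fun i : Fin L'.length => L.get (f i)) := by
    conv_lhs => rw [← List.ofFn_get L']
    exact congrArg _ (funext hf)
  rw [h1]
  conv_rhs => rw [h2]
  rw [List.prod_ofFn, List.prod_ofFn]
  apply Finset.prod_le_prod
  · intro i _
    exact hpos _ (L.get_mem _)
  · intro i _
    apply hL.rel_get_of_le
    have := fin_le_apply f.strictMono i
    rw [Fin.le_def]
    simpa using this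

private lemma sort_sublist {F' F : Finset ℝ} (h : F' ⊆ F) :
    List.Sublist (F'.sort (· ≤ ·)) (F.sort (· ≤ ·)) := by
  apply List.sublist_of_subperm_of_pairwise _ (F'.pairwise_sort _) (F.pairwise_sort _)
  rw [← Multiset.coe_le, Finset.sort_eq, Finset.sort_eq]
  exact Finset.val_le_iff.mpr h

private lemma exists_top_subset (S : Finset ℕ) (w : ℕ → ℕ) :
    ∀ a, a ≤ S.card → ∃ H, H ⊆ S ∧ H.card = a ∧ ∀ x ∈ H, ∀ y ∈ S \ H, w y ≤ w x := by
  intro a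
  induction a with
  | zero => intro _; exact ⟨∅, Finset.empty_subset _, Finset.card_empty, by simp⟩
  | succ a ih =>
    intro h
    obtain ⟨H, hHS, hcard, hH⟩ := ih (Nat.le_of_succ_le h)
    have hne : (S \ H).Nonempty := by
      rw [← Finset.card_pos, Finset.card_sdiff_of_subset hHS]
      omega
    obtain ⟨x, hx, hmax⟩ := Finset.exists_max_image (S \ H) w hne
    refine ⟨insert x H, ?_, ?_, ?_⟩
    · exact Finset.insert_subset (Finset.mem_sdiff.mp hx).1 hHS
    · rw [Finset.card_insert_of_notMem (Finset.mem_sdiff.mp hx).2, hcard]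
    · intro z hz y hy
      have hy' : y ∈ S \ H := by
        rw [Finset.mem_sdiff] at hy ⊢
        exact ⟨hy.1, fun hyH => hy.2 (Finset.mem_insert_of_mem hyH)⟩
      rcases Finset.mem_insert.mp hz with rfl | hzH
      · exact hmax y hy'
      · exact hH z hzH y hy'

private lemma zpow_prod_sum (x : ℝ) (hx : x ≠ 0) (s : Finset ℕ) (g : ℕ → ℤ) :
    ∏ j ∈ s, x ^ g j = x ^ (∑ j ∈ s, g j) := by
  induction s using Finset.cons_induction with
  | empty => simp
  | cons a s ha ih => rw [Finset.prod_cons, Finset.sum_cons, ih, zpow_add₀ hx]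


private lemma exp_inj (d : ℕ) (o p : ℕ → ℕ) {j j' : ℕ}
    (ho1 : 1 ≤ o j) (hod : o j ≤ d) (ho1' : 1 ≤ o j') (hod' : o j' ≤ d)
    (h : o j + p j * d = o j' + p j' * d) : o j = o j' := by
  rcases Nat.lt_trichotomy (p j) (p j') with hp | hp | hp
  · have : p j * d + d ≤ p j' * d := by
      calc p j * d + d = (p j + 1) * d := by ring
      _ ≤ p j' * d := Nat.mul_le_mul_right d hp
    omega
  · rw [hp] at h; omega
  · have : p j' * d + d ≤ p j * d := by
      calc p j' * d + d = (p j' + 1) * d := by ring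
      _ ≤ p j * d := Nat.mul_le_mul_right d hp
    omega

private lemma f_inj (b : ℕ) (hb : 2 ≤ b) (d : ℕ) (S : Finset ℕ) (o : ℕ → ℕ)
    (ho1 : ∀ j ∈ S, 1 ≤ o j) (hod : ∀ j ∈ S, o j ≤ d)
    (hoinj : ∀ j ∈ S, ∀ j' ∈ S, o j = o j' → j = j') (l : ℕ → ℕ) :
    ∀ j ∈ S, ∀ j' ∈ S, j ≠ j' →
      ((b : ℝ) - 1) * (b : ℝ) ^ (-((o j + (l j - 1) * d : ℕ) : ℤ)) ≠
        ((b : ℝ) - 1) * (b : ℝ) ^ (-((o j' + (l j' - 1) * d : ℕ) : ℤ)) := by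
  intro j hj j' hj' hne heq
  have hb0 : (0:ℝ) < (b:ℝ) := by positivity
  have hb1 : ((b:ℝ) - 1) ≠ 0 := by
    have : (2:ℝ) ≤ (b:ℝ) := by exact_mod_cast hb
    linarith
  have h2 : (b : ℝ) ^ (-((o j + (l j - 1) * d : ℕ) : ℤ)) =
      (b : ℝ) ^ (-((o j' + (l j' - 1) * d : ℕ) : ℤ)) := by
    exact mul_left_cancel₀ hb1 heq
  have hbne1 : (b:ℝ) ≠ 1 := by
    have : (2:ℝ) ≤ (b:ℝ) := by exact_mod_cast hb
    linarith
  have h3 := zpow_right_injective₀ hb0 hbne1 h2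
  have h4 : o j + (l j - 1) * d = o j' + (l j' - 1) * d := by
    have := neg_injective h3
    exact_mod_cast this
  exact hne (hoinj j hj j' hj'
    (exp_inj d o (fun j => l j - 1) (ho1 j hj) (hod j hj) (ho1' := ho1 j' hj')
      (hod' := hod j' hj') h4))

private lemma key_nat (α d : ℕ) (S H : Finset ℕ) (l : ℕ → ℕ) (hHS : H ⊆ S)
    (hHcard : H.card = min α S.card) (hα : 1 ≤ α) (hS1 : 1 ≤ S.card) (hrd : S.card ≤ d)
    (hHtop : ∀ x ∈ H, ∀ y ∈ S \ H, l y ≤ l x) :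
    min α d * ∑ j ∈ S, (l j - 1) ≤ (∑ j ∈ H, (l j - 1)) * d := by
  set r := S.card with hr
  set a := min α r with ha
  set m := min α d with hm
  have ha1 : 1 ≤ a := le_min hα hS1
  have har : a ≤ r := min_le_right _ _
  set B := ∑ j ∈ H, (l j - 1) with hB
  set C := ∑ j ∈ S \ H, (l j - 1) with hC
  have hSC : ∑ j ∈ S, (l j - 1) = B + C := by
    rw [← Finset.sum_sdiff hHS]; omega
  have hCbd : a * C ≤ (r - a) * B := by
    calc a * C = ∑ y ∈ S \ H, a * (l y - 1) := by rw [Finset.mul_sum]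
    _ ≤ ∑ _y ∈ S \ H, B := by
        apply Finset.sum_le_sum
        intro y hy
        calc a * (l y - 1) = ∑ _x ∈ H, (l y - 1) := by
              rw [Finset.sum_const, hHcard, smul_eq_mul, ha]
        _ ≤ B := Finset.sum_le_sum fun x hx => by have := hHtop x hx y hy; omega
    _ = (S \ H).card * B := by rw [Finset.sum_const, smul_eq_mul]
    _ = (r - a) * B := by rw [Finset.card_sdiff_of_subset hHS, hHcard, ha, hr]
  have hmr : m * r ≤ a * d := by
    rcases le_total α r with h | h
    · have h1 : a = α := by rw [ha]; omega
      have h2 : m ≤ α := min_le_left _ _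
      rw [h1]
      exact Nat.mul_le_mul h2 hrd
    · have h1 : a = r := by rw [ha]; omega
      rw [h1, mul_comm r d]
      exact Nat.mul_le_mul_right r (min_le_right _ _)
  have final : a * (m * (B + C)) ≤ a * (B * d) := by
    calc a * (m * (B + C)) = a * m * B + m * (a * C) := by ring
    _ ≤ a * m * B + m * ((r - a) * B) := Nat.add_le_add_left (Nat.mul_le_mul_left m hCbd) _
    _ = (a + (r - a)) * m * B := by ring
    _ = m * r * B := by
        have : a + (r - a) = r := by omega
        rw [this]; ring
    _ ≤ a * d * B := Nat.mul_le_mul_right B hmr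
    _ = a * (B * d) := by ring
  rw [hSC]
  exact Nat.le_of_mul_le_mul_left final (by omega)

private lemma block_ineq (b : ℕ) (hb : 2 ≤ b) (α d : ℕ) (hα : 1 ≤ α) (hd : 1 ≤ d)
    (S : Finset ℕ) (hSne : S.Nonempty) (o : ℕ → ℕ)
    (ho1 : ∀ j ∈ S, 1 ≤ o j) (hod : ∀ j ∈ S, o j ≤ d)
    (hoinj : ∀ j ∈ S, ∀ j' ∈ S, o j = o j' → j = j')
    (l : ℕ → ℕ) (hl : ∀ j ∈ S, 1 ≤ l j) :
    (((S.image fun j => ((b:ℝ)-1) * (b:ℝ) ^ (-((o j + (l j - 1) * d : ℕ) : ℤ))).sort (· ≤ ·)).take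
        (min α S.card)).prod ≤ ∏ j ∈ S, (b:ℝ) ^ (-((min α d * (l j - 1) : ℕ) : ℤ)) := by
  have hb0 : (0:ℝ) < b := by positivity
  have hb2 : (2:ℝ) ≤ (b:ℝ) := by exact_mod_cast hb
  have hbne : (b:ℝ) ≠ 0 := ne_of_gt hb0
  have hb1 : (1:ℝ) ≤ (b:ℝ) := by linarith
  set f : ℕ → ℝ := fun j => ((b:ℝ)-1) * (b:ℝ) ^ (-((o j + (l j - 1) * d : ℕ) : ℤ)) with hfdef
  have hfpos : ∀ j, 0 < f j := fun j =>
    mul_pos (by linarith) (zpow_pos hb0 _)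
  have hinj := f_inj b hb d S o ho1 hod hoinj l
  have hinjOn : Set.InjOn f ↑S := by
    intro x hx y hy hxy
    by_contra hne
    exact hinj x hx y hy hne hxy
  have hrd : S.card ≤ d := by
    have h := Finset.card_le_card_of_injOn o
      (fun j hj => Finset.mem_Icc.mpr ⟨ho1 j hj, hod j hj⟩)
      (fun x hx y hy hxy => hoinj x hx y hy hxy)
    simpa [Nat.card_Icc] using h
  set r := S.card with hr
  set a := min α r with ha
  have hS1 : 1 ≤ r := Finset.card_pos.mpr hSne
  have har : a ≤ r := min_le_right _ _
  obtain ⟨H, hHS, hHcard, hHtop⟩ := exists_top_subset S l a har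
  set F := S.image f with hF
  set F' := H.image f with hF'
  have hFF : F' ⊆ F := Finset.image_subset_image hHS
  have hinjOnH : Set.InjOn f ↑H := hinjOn.mono (by exact_mod_cast hHS)
  have hlen : (F'.sort (· ≤ ·)).length = a := by
    rw [Finset.length_sort, hF', Finset.card_image_of_injOn hinjOnH, hHcard]
  have step1 : ((F.sort (· ≤ ·)).take a).prod ≤ (F'.sort (· ≤ ·)).prod := by
    rw [← hlen]
    apply take_prod_le (F.pairwise_sort _) (sort_sublist hFF)
    intro x hx
    rw [Finset.mem_sort] at hx
    obtain ⟨j, _, rfl⟩ := Finset.mem_image.mp hx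
    exact le_of_lt (hfpos j)
  have step2 : (F'.sort (· ≤ ·)).prod = ∏ j ∈ H, f j := by
    have h1 : (F'.sort (· ≤ ·)).prod = F'.1.prod := by
      rw [← Finset.sort_eq F' (· ≤ ·), Multiset.prod_coe]
    rw [h1]
    have h2 : ∏ x ∈ F', x = F'.1.prod := by
      rw [Finset.prod_eq_multiset_prod, Multiset.map_id']
    rw [← h2, hF', Finset.prod_image (fun x hx y hy => hinjOnH hx hy)]
  have step3 : ∏ j ∈ H, f j ≤ ∏ j ∈ H, (b:ℝ) ^ (-(((l j - 1) * d : ℕ) : ℤ)) := by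
    apply Finset.prod_le_prod (fun j _ => le_of_lt (hfpos j))
    intro j hj
    have e1 : (-((o j + (l j - 1) * d : ℕ) : ℤ)) ≤ -((1 + (l j - 1) * d : ℕ) : ℤ) := by
      apply neg_le_neg
      exact_mod_cast Nat.add_le_add_right (ho1 j (hHS hj)) _
    have e2 : f j ≤ ((b:ℝ)-1) * (b:ℝ) ^ (-((1 + (l j - 1) * d : ℕ) : ℤ)) := by
      apply mul_le_mul_of_nonneg_left (zpow_le_zpow_right₀ hb1 e1) (by linarith)
    refine e2.trans ?_
    have e3 : (-((1 + (l j - 1) * d : ℕ) : ℤ)) = (-1) + (-(((l j - 1) * d : ℕ) : ℤ)) := by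
      push_cast; ring
    rw [e3, zpow_add₀ hbne, zpow_neg_one, ← mul_assoc]
    have e4 : ((b:ℝ)-1) * (b:ℝ)⁻¹ ≤ 1 := by
      have e5 : ((b:ℝ)-1) * (b:ℝ)⁻¹ ≤ (b:ℝ) * (b:ℝ)⁻¹ :=
        mul_le_mul_of_nonneg_right (by linarith) (by positivity)
      rwa [mul_inv_cancel₀ hbne] at e5
    calc ((b:ℝ)-1) * (b:ℝ)⁻¹ * (b:ℝ) ^ (-(((l j - 1) * d : ℕ) : ℤ))
        ≤ 1 * (b:ℝ) ^ (-(((l j - 1) * d : ℕ) : ℤ)) :=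
          mul_le_mul_of_nonneg_right e4 (le_of_lt (zpow_pos hb0 _))
    _ = (b:ℝ) ^ (-(((l j - 1) * d : ℕ) : ℤ)) := one_mul _
  have step4 : ∏ j ∈ H, (b:ℝ) ^ (-(((l j - 1) * d : ℕ) : ℤ)) ≤
      ∏ j ∈ S, (b:ℝ) ^ (-((min α d * (l j - 1) : ℕ) : ℤ)) := by
    rw [zpow_prod_sum (b:ℝ) hbne, zpow_prod_sum (b:ℝ) hbne]
    apply zpow_le_zpow_right₀ hb1
    have key := key_nat α d S H l hHS hHcard hα hS1 hrd hHtop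
    have c1 : ∑ j ∈ H, (-(((l j - 1) * d : ℕ) : ℤ)) = -(((∑ j ∈ H, (l j - 1)) * d : ℕ) : ℤ) := by
      push_cast
      rw [Finset.sum_mul, ← Finset.sum_neg_distrib]
    have c2 : ∑ j ∈ S, (-((min α d * (l j - 1) : ℕ) : ℤ)) =
        -((min α d * ∑ j ∈ S, (l j - 1) : ℕ) : ℤ) := by
      push_cast
      rw [Finset.mul_sum, ← Finset.sum_neg_distrib]
    rw [c1, c2]
    apply neg_le_neg
    exact_mod_cast key
  calc ((F.sort (· ≤ ·)).take a).prod ≤ (F'.sort (· ≤ ·)).prod := step1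
  _ = ∏ j ∈ H, f j := step2
  _ ≤ ∏ j ∈ H, (b:ℝ) ^ (-(((l j - 1) * d : ℕ) : ℤ)) := step3
  _ ≤ ∏ j ∈ S, (b:ℝ) ^ (-((min α d * (l j - 1) : ℕ) : ℤ)) := step4

private lemma blk_mem_iff (d : ℕ) (hd : 1 ≤ d) (j : ℕ) (hj : 1 ≤ j) (i : ℕ) (hi : 1 ≤ i) :
    (j - 1) / d + 1 = i ↔ ((i - 1) * d + 1 ≤ j ∧ j ≤ i * d) := by
  obtain ⟨i', rfl⟩ : ∃ i', i = i' + 1 := ⟨i - 1, by omega⟩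
  have hmul : (i' + 1) * d = i' * d + d := by ring
  have hmul2 : (i' + 1 - 1) * d = i' * d := by simp
  constructor
  · intro h
    have hq : (j - 1) / d = i' := by omega
    have h1 : i' * d ≤ j - 1 := by
      rw [← hq]; exact Nat.div_mul_le_self _ _
    have h2 : j - 1 < (i' + 1) * d := by
      rw [← hq]; exact (Nat.div_lt_iff_lt_mul (by omega)).mp (Nat.lt_succ_self _)
    omega
  · rintro ⟨h1, h2⟩
    have hq : (j - 1) / d = i' := Nat.div_eq_of_lt_le (by omega) (by omega)
    omega

theorem statement8 (b : ℕ) (hb : 2 ≤ b) (α d s : ℕ) (hα : 1 ≤ α) (hd : 1 ≤ d) (hs : 1 ≤ s)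
    (u : Finset ℕ) (hune : u ≠ ∅) (husub : u ⊆ Finset.Icc 1 (d * s))
    (l : ℕ → ℕ) (hl : ∀ j ∈ u, 1 ≤ l j) :
    (∀ i ∈ blk d u, ∀ j ∈ u ∩ Finset.Icc ((i - 1) * d + 1) (i * d),
        ∀ j' ∈ u ∩ Finset.Icc ((i - 1) * d + 1) (i * d), j ≠ j' →
          ((b : ℝ) - 1) * (b : ℝ) ^ (-(((j - (i - 1) * d) + (l j - 1) * d : ℕ) : ℤ)) ≠
            ((b : ℝ) - 1) * (b : ℝ) ^ (-(((j' - (i - 1) * d) + (l j' - 1) * d : ℕ) : ℤ))) ∧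
    ∏ i ∈ blk d u,
        ((((u ∩ Finset.Icc ((i - 1) * d + 1) (i * d)).image fun j =>
              ((b : ℝ) - 1) * (b : ℝ) ^ (-(((j - (i - 1) * d) + (l j - 1) * d : ℕ) : ℤ))).sort
            (· ≤ ·)).take
          (min α (u ∩ Finset.Icc ((i - 1) * d + 1) (i * d)).card)).prod ≤
      ∏ j ∈ u, (b : ℝ) ^ (-((min α d * (l j - 1) : ℕ) : ℤ)) := by
  have hu1 : ∀ j ∈ u, 1 ≤ j := fun j hj => (Finset.mem_Icc.mp (husub hj)).1
  have hblk1 : ∀ i ∈ blk d u, 1 ≤ i := by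
    intro i hi
    obtain ⟨j0, _, rfl⟩ := Finset.mem_image.mp hi
    exact Nat.succ_le_succ (Nat.zero_le _)
  -- basic facts about the blocks
  have hSfacts : ∀ i ∈ blk d u, ∀ j ∈ u ∩ Finset.Icc ((i - 1) * d + 1) (i * d),
      1 ≤ j - (i - 1) * d ∧ j - (i - 1) * d ≤ d := by
    intro i hi j hj
    have hi1 := hblk1 i hi
    obtain ⟨i', rfl⟩ : ∃ i', i = i' + 1 := ⟨i - 1, by omega⟩
    have hmul : (i' + 1) * d = i' * d + d := by ring
    have hmul2 : (i' + 1 - 1) * d = i' * d := by simp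
    rw [Finset.mem_inter, Finset.mem_Icc] at hj
    omega
  have hoinj : ∀ i ∈ blk d u, ∀ j ∈ u ∩ Finset.Icc ((i - 1) * d + 1) (i * d),
      ∀ j' ∈ u ∩ Finset.Icc ((i - 1) * d + 1) (i * d),
        j - (i - 1) * d = j' - (i - 1) * d → j = j' := by
    intro i hi j hj j' hj' h
    rw [Finset.mem_inter, Finset.mem_Icc] at hj hj'
    omega
  constructor
  · intro i hi j hj j' hj' hne
    exact f_inj b hb d (u ∩ Finset.Icc ((i - 1) * d + 1) (i * d)) (fun j => j - (i - 1) * d)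
      (fun j hj => (hSfacts i hi j hj).1) (fun j hj => (hSfacts i hi j hj).2)
      (hoinj i hi) l j hj j' hj' hne
  · have hdec : ∀ g : ℕ → ℝ, ∏ j ∈ u, g j =
        ∏ i ∈ blk d u, ∏ j ∈ u ∩ Finset.Icc ((i - 1) * d + 1) (i * d), g j := by
      intro g
      have hmaps : ∀ j ∈ u, (j - 1) / d + 1 ∈ blk d u := fun j hj => by
        show _ ∈ u.image fun j => (j - 1) / d + 1
        exact Finset.mem_image_of_mem _ hj
      rw [← Finset.prod_fiberwise_of_maps_to (g := fun j : ℕ => (j - 1) / d + 1) hmaps g]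
      apply Finset.prod_congr rfl
      intro i hi
      apply Finset.prod_congr ?_ (fun _ _ => rfl)
      ext j
      simp only [Finset.mem_filter, Finset.mem_inter, Finset.mem_Icc]
      constructor
      · rintro ⟨hju, hji⟩
        have := (blk_mem_iff d hd j (hu1 j hju) i (hblk1 i hi)).mp hji
        exact ⟨hju, this⟩
      · rintro ⟨hju, hji⟩
        exact ⟨hju, (blk_mem_iff d hd j (hu1 j hju) i (hblk1 i hi)).mpr hji⟩
    rw [hdec (fun j => (b : ℝ) ^ (-((min α d * (l j - 1) : ℕ) : ℤ)))]
    apply Finset.prod_le_prod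
    · intro i hi
      apply List.prod_nonneg
      intro x hx
      have hx2 := Finset.mem_sort (α := ℝ) (· ≤ ·) |>.mp (List.take_subset _ _ hx)
      obtain ⟨j, _, rfl⟩ := Finset.mem_image.mp hx2
      have hb0 : (0:ℝ) < b := by positivity
      have hb2 : (2:ℝ) ≤ (b:ℝ) := by exact_mod_cast hb
      have := zpow_pos hb0 (-(((j - (i - 1) * d) + (l j - 1) * d : ℕ) : ℤ))
      nlinarith
    · intro i hi
      have hSne : (u ∩ Finset.Icc ((i - 1) * d + 1) (i * d)).Nonempty := by
        obtain ⟨j0, hj0, rfl⟩ := Finset.mem_image.mp hi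
        refine ⟨j0, Finset.mem_inter.mpr ⟨hj0, Finset.mem_Icc.mpr ?_⟩⟩
        exact (blk_mem_iff d hd j0 (hu1 j0 hj0) _ (Nat.succ_le_succ (Nat.zero_le _))).mp rfl
      exact block_ineq b hb α d hα hd (u ∩ Finset.Icc ((i - 1) * d + 1) (i * d)) hSne
        (fun j => j - (i - 1) * d)
        (fun j hj => (hSfacts i hi j hj).1) (fun j hj => (hSfacts i hi j hj).2)
        (hoinj i hi) l (fun j hj => hl j (Finset.mem_inter.mp hj).1)

end ISPLR
end
end

section
/- Let b be a prime, m ∈ ℕ, p ∈ F_b[x] irreducible with deg(p) = m, a ≥ 1 an integer, and λ a real with 1/(2a+1) < λ ≤ 1. Let u be a finite index set and (q_j)_{j∈u} ∈ (F_b[x])^u be arbitrary fixed polynomials. Then (1/(b^m - 1)) Σ_{q̃ ∈ R_{b,m}} Σ over all ((k_j)_{j∈u}, k) ∈ ℕ^u × ℕ with Σ_{j∈u} tr_m(k_j) q_j + tr_m(k) q̃ ≡ 0 (mod p) of [Π_{j∈u} b^{-(2a+1)λ μ(k_j)}] · b^{-(2a+1)λ μ(k)} is at most [(b-1)/((b^m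 - 1)(1 - b^{1-(2a+1)λ}))] · [(b-1)/(1 - b^{1-(2a+1)λ})]^{|u|}. -/
open scoped Classical
open Polynomial

noncomputable section

namespace ISPLR

/-! ### Auxiliary lemmas -/

section Aux

lemma digit_lt {b : ℕ} (hb : 2 ≤ b) (k i : ℕ) : digit b k i < b :=
  Nat.mod_lt _ (by omega)

lemma pow_dvd_iff_digit {b : ℕ} (hb : 2 ≤ b) (m k : ℕ) :
    b ^ m ∣ k ↔ ∀ i < m, digit b k i = 0 := by
  induction m with
  | zero => simp
  | succ m ih =>
    constructor
    · intro h i hi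
      have hm : b ^ m ∣ k := (pow_dvd_pow b m.le_succ).trans h
      rcases Nat.lt_succ_iff_lt_or_eq.mp hi with hi' | rfl
      · exact ih.mp hm i hi'
      · have hik : b ^ i ∣ k := (pow_dvd_pow b i.le_succ).trans h
        have h1 : b ∣ k / b ^ i := by
          rw [Nat.dvd_div_iff_mul_dvd hik, ← pow_succ]
          exact h
        exact Nat.mod_eq_zero_of_dvd h1
    · intro h
      have hm : b ^ m ∣ k := ih.mpr fun i hi => h i (hi.trans m.lt_succ_self)
      have h1 : b ∣ k / b ^ m := Nat.dvd_of_mod_eq_zero (h m m.lt_succ_self)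
      rw [pow_succ]
      exact (Nat.dvd_div_iff_mul_dvd hm).mp h1

lemma coeff_trunc (b m k n : ℕ) :
    (trunc b m k).coeff n = if n < m then ((digit b k n : ZMod b)) else 0 := by
  rw [trunc, Polynomial.finset_sum_coeff]
  simp only [Polynomial.coeff_C_mul, Polynomial.coeff_X_pow, mul_ite, mul_one, mul_zero]
  rw [Finset.sum_ite_eq (Finset.range m) n fun i => ((digit b k i : ZMod b))]
  simp [Finset.mem_range]

lemma degree_trunc_lt (b m k : ℕ) : (trunc b m k).degree < (m : WithBot ℕ) := by
  rw [Polynomial.degree_lt_iff_coeff_zero]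
  intro n hn
  rw [coeff_trunc, if_neg (by omega)]

lemma trunc_eq_zero_iff {b : ℕ} (hb : 2 ≤ b) (m k : ℕ) :
    trunc b m k = 0 ↔ b ^ m ∣ k := by
  haveI : NeZero b := ⟨by omega⟩
  rw [pow_dvd_iff_digit hb, Polynomial.ext_iff]
  constructor
  · intro h i hi
    have h2 := h i
    rw [coeff_trunc, if_pos hi, Polynomial.coeff_zero] at h2
    have hd : b ∣ digit b k i := (ZMod.natCast_eq_zero_iff _ _).mp h2
    exact Nat.eq_zero_of_dvd_of_lt hd (digit_lt hb k i)
  · intro h n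
    rw [coeff_trunc, Polynomial.coeff_zero]
    split
    · rename_i hn
      rw [h n hn, Nat.cast_zero]
    · rfl

lemma mem_Rfin {b : ℕ} (hb : 2 ≤ b) {m : ℕ} {qt : Polynomial (ZMod b)}
    (h : qt ∈ Rfin b m) : qt ≠ 0 ∧ qt.degree < (m : WithBot ℕ) := by
  rw [Rfin, Finset.mem_image] at h
  obtain ⟨n, hn, rfl⟩ := h
  rw [Finset.mem_filter, Finset.mem_range] at hn
  refine ⟨?_, degree_trunc_lt b m n⟩
  rw [Ne, trunc_eq_zero_iff hb]
  intro hd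
  exact absurd (Nat.le_of_dvd (Nat.pos_of_ne_zero hn.2) hd) (not_le.mpr hn.1)

lemma card_Rfin_le (b m : ℕ) : (Rfin b m).card ≤ b ^ m - 1 := by
  refine Finset.card_image_le.trans ?_
  classical
  have : (Finset.range (b ^ m)).filter (fun n => n ≠ 0) ⊆ (Finset.range (b ^ m)).erase 0 := by
    intro x hx
    rw [Finset.mem_filter] at hx
    exact Finset.mem_erase.mpr ⟨hx.2, hx.1⟩
  refine (Finset.card_le_card this).trans ?_
  rcases Nat.eq_zero_or_pos (b ^ m) with h0 | h0
  · simp [h0]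
  · rw [Finset.card_erase_of_mem (Finset.mem_range.mpr h0), Finset.card_range]

/-- The key counting fact: for `t ≠ 0` of degree `< m`, the set of `qt ∈ R_{b,m}` with
`p ∣ S + t * qt` is empty if `p ∣ S` and has at most one element otherwise. -/
lemma count_filter_le {b : ℕ} [Fact (Nat.Prime b)] {m : ℕ}
    {p : Polynomial (ZMod b)} (hp : Irreducible p) (hdeg : p.degree = (m : WithBot ℕ))
    (S t : Polynomial (ZMod b)) (ht : t ≠ 0) (htd : t.degree < (m : WithBot ℕ)) :
    ((Rfin b m).filter (fun qt => p ∣ S + t * qt)).card ≤ if p ∣ S then 0 else 1 := by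
  have hb2 : 2 ≤ b := (Fact.out (p := Nat.Prime b)).two_le
  have hprime : Prime p := hp.prime
  have hnd : ¬ p ∣ t := fun hd => ht (Polynomial.eq_zero_of_dvd_of_degree_lt hd (hdeg ▸ htd))
  by_cases hS : p ∣ S
  · rw [if_pos hS, Nat.le_zero, Finset.card_eq_zero, Finset.filter_eq_empty_iff]
    intro qt hqt hdvd
    have h1 : p ∣ t * qt := (dvd_add_right hS).mp hdvd
    rcases hprime.2.2 _ _ h1 with h | h
    · exact hnd h
    · obtain ⟨hq0, hqd⟩ := mem_Rfin hb2 hqt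
      exact hq0 (Polynomial.eq_zero_of_dvd_of_degree_lt h (hdeg ▸ hqd))
  · rw [if_neg hS, Finset.card_le_one]
    intro q1 h1 q2 h2
    rw [Finset.mem_filter] at h1 h2
    have hd : p ∣ t * (q1 - q2) := by
      have := dvd_sub h1.2 h2.2
      have he : (S + t * q1) - (S + t * q2) = t * (q1 - q2) := by ring
      rwa [he] at this
    rcases hprime.2.2 _ _ hd with h | h
    · exact absurd h hnd
    · have hdlt : (q1 - q2).degree < p.degree := by
        rw [hdeg]
        exact lt_of_le_of_lt (Polynomial.degree_sub_le q1 q2)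
          (max_lt (mem_Rfin hb2 h1.1).2 (mem_Rfin hb2 h2.1).2)
      have := Polynomial.eq_zero_of_dvd_of_degree_lt h hdlt
      exact sub_eq_zero.mp this

/-- The weight function `b^{-c μ(k)}`. -/
def wfn (b : ℕ) (c : ℝ) (k : ℕ) : ℝ := (b : ℝ) ^ (-(c * (Nat.log b k : ℝ)))

/-- The weight function restricted to `k ≥ 1`. -/
def wfn' (b : ℕ) (c : ℝ) (k : ℕ) : ℝ := if 1 ≤ k then wfn b c k else 0

/-- The constant `(b-1)/(1-b^{1-c})`. -/
def Wc (b : ℕ) (c : ℝ) : ℝ := ((b : ℝ) - 1) / (1 - (b : ℝ) ^ ((1 : ℝ) - c))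

section Analytic

variable {b : ℕ} {c : ℝ}

lemma bR_one_lt (hb : 2 ≤ b) : (1 : ℝ) < b := by exact_mod_cast hb.trans_lt' one_lt_two

lemma bR_pos (hb : 2 ≤ b) : (0 : ℝ) < b := lt_trans one_pos (bR_one_lt hb)

lemma wfn_nonneg (hb : 2 ≤ b) (k : ℕ) : 0 ≤ wfn b c k :=
  Real.rpow_nonneg (bR_pos hb).le _

lemma wfn'_nonneg (hb : 2 ≤ b) (k : ℕ) : 0 ≤ wfn' b c k := by
  rw [wfn']; split
  · exact wfn_nonneg hb k
  · exact le_rfl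

lemma x_lt_one (hb : 2 ≤ b) (hc : 1 < c) : (b : ℝ) ^ ((1 : ℝ) - c) < 1 :=
  Real.rpow_lt_one_of_one_lt_of_neg (bR_one_lt hb) (by linarith)

lemma x_nonneg (hb : 2 ≤ b) : 0 ≤ (b : ℝ) ^ ((1 : ℝ) - c) :=
  Real.rpow_nonneg (bR_pos hb).le _

lemma denom_pos (hb : 2 ≤ b) (hc : 1 < c) : 0 < 1 - (b : ℝ) ^ ((1 : ℝ) - c) := by
  have := x_lt_one hb hc; linarith

lemma Wc_pos (hb : 2 ≤ b) (hc : 1 < c) : 0 < Wc b c :=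
  div_pos (by have := bR_one_lt hb; linarith) (denom_pos hb hc)

lemma sum_Ico_block (hb : 2 ≤ b) (g : ℕ) :
    ∑ k ∈ Finset.Ico (b ^ g) (b ^ (g + 1)), wfn b c k
      = ((b : ℝ) - 1) * ((b : ℝ) ^ ((1 : ℝ) - c)) ^ g := by
  have hbpos := bR_pos hb
  have hlog : ∀ k ∈ Finset.Ico (b ^ g) (b ^ (g + 1)), wfn b c k = (b : ℝ) ^ (-(c * (g : ℝ))) := by
    intro k hk
    rw [Finset.mem_Ico] at hk
    rw [wfn, Nat.log_eq_of_pow_le_of_lt_pow hk.1 hk.2]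
  rw [Finset.sum_congr rfl hlog, Finset.sum_const, Nat.card_Ico, nsmul_eq_mul]
  have hcast : ((b ^ (g + 1) - b ^ g : ℕ) : ℝ) = (b : ℝ) ^ g * ((b : ℝ) - 1) := by
    rw [Nat.cast_sub (Nat.pow_le_pow_right (by omega) g.le_succ)]
    push_cast
    rw [pow_succ]
    ring
  rw [hcast]
  have hx : ((b : ℝ) ^ ((1 : ℝ) - c)) ^ g = (b : ℝ) ^ (((1 : ℝ) - c) * (g : ℝ)) := by
    rw [← Real.rpow_natCast ((b : ℝ) ^ ((1 : ℝ) - c)) g, ← Real.rpow_mul hbpos.le]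
  have hg : (b : ℝ) ^ g = (b : ℝ) ^ ((g : ℕ) : ℝ) := (Real.rpow_natCast _ g).symm
  have hcomb : (b : ℝ) ^ g * (b : ℝ) ^ (-(c * (g : ℝ))) = ((b : ℝ) ^ ((1 : ℝ) - c)) ^ g := by
    rw [hx, hg, ← Real.rpow_add hbpos]
    congr 1
    ring
  calc (b : ℝ) ^ g * ((b : ℝ) - 1) * (b : ℝ) ^ (-(c * (g : ℝ)))
      = ((b : ℝ) - 1) * ((b : ℝ) ^ g * (b : ℝ) ^ (-(c * (g : ℝ)))) := by ring
  _ = ((b : ℝ) - 1) * ((b : ℝ) ^ ((1 : ℝ) - c)) ^ g := by rw [hcomb]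

lemma sum_Ico_one (hb : 2 ≤ b) (n : ℕ) :
    ∑ k ∈ Finset.Ico 1 (b ^ n), wfn b c k
      = ((b : ℝ) - 1) * ∑ g ∈ Finset.range n, ((b : ℝ) ^ ((1 : ℝ) - c)) ^ g := by
  induction n with
  | zero => simp
  | succ n ih =>
    rw [← Finset.sum_Ico_consecutive (f := wfn b c) (Nat.one_le_pow n b (by omega))
        (Nat.pow_le_pow_right (by omega) n.le_succ),
      ih, sum_Ico_block hb, Finset.sum_range_succ, mul_add]

lemma sum_wfn'_le (hb : 2 ≤ b) (hc : 1 < c) (s : Finset ℕ) :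
    ∑ k ∈ s, wfn' b c k ≤ Wc b c := by
  classical
  have hx0 := x_nonneg (c := c) hb
  have hx1 := x_lt_one hb hc
  have hsub : s.filter (fun k => 1 ≤ k) ⊆ Finset.Ico 1 (b ^ (s.sup (Nat.log b) + 1)) := by
    intro k hk
    rw [Finset.mem_filter] at hk
    rw [Finset.mem_Ico]
    have hlt : k < b ^ (Nat.log b k + 1) := Nat.lt_pow_succ_log_self (by omega : 1 < b) k
    have hle : Nat.log b k ≤ s.sup (Nat.log b) := Finset.le_sup (f := Nat.log b) hk.1
    exact ⟨hk.2, lt_of_lt_of_le hlt (Nat.pow_le_pow_right (by omega) (by omega))⟩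
  have h1 : ∑ k ∈ s, wfn' b c k = ∑ k ∈ s.filter (fun k => 1 ≤ k), wfn b c k := by
    rw [Finset.sum_filter]
    exact Finset.sum_congr rfl fun k _ => by simp [wfn']
  rw [h1]
  refine le_trans (Finset.sum_le_sum_of_subset_of_nonneg hsub fun k _ _ => wfn_nonneg hb k) ?_
  rw [sum_Ico_one hb]
  have hgeo : ∑ g ∈ Finset.range (s.sup (Nat.log b) + 1), ((b : ℝ) ^ ((1 : ℝ) - c)) ^ g
      ≤ (1 - (b : ℝ) ^ ((1 : ℝ) - c))⁻¹ :=
    sum_le_hasSum _ (fun i _ => pow_nonneg hx0 i) (hasSum_geometric_of_lt_one hx0 hx1)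
  rw [Wc, div_eq_mul_inv]
  exact mul_le_mul_of_nonneg_left hgeo (by have := bR_one_lt hb; linarith)

lemma summable_wfn' (hb : 2 ≤ b) (hc : 1 < c) : Summable (wfn' b c) :=
  summable_of_sum_le (fun k => wfn'_nonneg hb k) (fun s => sum_wfn'_le hb hc s)

lemma log_pow_mul (hb : 2 ≤ b) (m t : ℕ) (ht : 1 ≤ t) :
    Nat.log b (b ^ m * t) = m + Nat.log b t := by
  induction m with
  | zero => simp
  | succ m ih =>
    have he : b ^ (m + 1) * t = b ^ m * t * b := by ring
    rw [he, Nat.log_mul_base (by omega)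
      (Nat.mul_pos (Nat.pow_pos (by omega)) ht).ne', ih]
    omega

lemma sum_mult_le (hb : 2 ≤ b) (hc : 1 < c) (m : ℕ) (s : Finset ℕ) :
    ∑ k ∈ s.filter (fun k => 1 ≤ k ∧ b ^ m ∣ k), wfn b c k
      ≤ (b : ℝ) ^ (-(c * (m : ℝ))) * Wc b c := by
  classical
  have hbpos := bR_pos hb
  have key : ∀ k ∈ s.filter (fun k => 1 ≤ k ∧ b ^ m ∣ k),
      wfn b c k = (b : ℝ) ^ (-(c * (m : ℝ))) * wfn' b c (k / b ^ m) := by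
    intro k hk
    rw [Finset.mem_filter] at hk
    obtain ⟨-, hk1, t, rfl⟩ := hk
    have ht : 1 ≤ t := by
      rcases Nat.eq_zero_or_pos t with rfl | h
      · simp at hk1
      · exact h
    rw [Nat.mul_div_cancel_left t (Nat.pow_pos (by omega))]
    rw [wfn, log_pow_mul hb m t ht, wfn', if_pos ht, wfn, ← Real.rpow_add hbpos]
    congr 1
    push_cast
    ring
  rw [Finset.sum_congr rfl key, ← Finset.mul_sum]
  refine mul_le_mul_of_nonneg_left ?_ (Real.rpow_nonneg hbpos.le _)
  have hinj : ∀ x ∈ s.filter (fun k => 1 ≤ k ∧ b ^ m ∣ k),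
      ∀ y ∈ s.filter (fun k => 1 ≤ k ∧ b ^ m ∣ k), x / b ^ m = y / b ^ m → x = y := by
    intro x hx y hy hxy
    rw [Finset.mem_filter] at hx hy
    rw [← Nat.div_mul_cancel hx.2.2, ← Nat.div_mul_cancel hy.2.2, hxy]
  rw [← Finset.sum_image hinj]
  exact sum_wfn'_le hb hc _

lemma mult_const_le (hb : 2 ≤ b) (hc : 1 < c) (m : ℕ) :
    ((b ^ m - 1 : ℕ) : ℝ) * ((b : ℝ) ^ (-(c * (m : ℝ))) * Wc b c) ≤ Wc b c := by
  have hbpos := bR_pos hb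
  have hW := Wc_pos hb hc
  have h1 : ((b ^ m - 1 : ℕ) : ℝ) ≤ (b : ℝ) ^ (c * (m : ℝ)) := by
    calc ((b ^ m - 1 : ℕ) : ℝ) ≤ ((b ^ m : ℕ) : ℝ) := by exact_mod_cast Nat.sub_le _ _
    _ = (b : ℝ) ^ ((m : ℕ) : ℝ) := by push_cast; rw [Real.rpow_natCast]
    _ ≤ (b : ℝ) ^ (c * (m : ℝ)) := Real.rpow_le_rpow_of_exponent_le (bR_one_lt hb).le
        (by nlinarith [Nat.cast_nonneg (α := ℝ) m])
  calc ((b ^ m - 1 : ℕ) : ℝ) * ((b : ℝ) ^ (-(c * (m : ℝ))) * Wc b c)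
      ≤ (b : ℝ) ^ (c * (m : ℝ)) * ((b : ℝ) ^ (-(c * (m : ℝ))) * Wc b c) := by
        refine mul_le_mul_of_nonneg_right h1 ?_
        positivity
  _ = Wc b c := by
        rw [← mul_assoc, ← Real.rpow_add hbpos]
        simp

lemma sum_pi_le {ι : Type*} [Fintype ι] (hb : 2 ≤ b) (hc : 1 < c)
    (s₁ : Finset (ι → ℕ)) :
    ∑ κ ∈ s₁, ∏ j, wfn' b c (κ j) ≤ Wc b c ^ Fintype.card ι := by
  classical
  set t : Finset ℕ := s₁.biUnion fun κ => Finset.image κ Finset.univ with ht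
  have hsub : s₁ ⊆ Fintype.piFinset fun _ : ι => t := by
    intro κ hκ
    rw [Fintype.mem_piFinset]
    intro j
    exact Finset.mem_biUnion.mpr ⟨κ, hκ, Finset.mem_image_of_mem κ (Finset.mem_univ j)⟩
  refine le_trans (Finset.sum_le_sum_of_subset_of_nonneg hsub fun κ _ _ =>
    Finset.prod_nonneg fun j _ => wfn'_nonneg hb _) ?_
  rw [← Finset.prod_univ_sum]
  have hstep : (∏ _j : ι, ∑ k ∈ t, wfn' b c k) ≤ ∏ _j : ι, Wc b c :=
    Finset.prod_le_prod (fun j _ => Finset.sum_nonneg fun k _ => wfn'_nonneg hb k)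
      (fun j _ => sum_wfn'_le hb hc t)
  have h2 : (∏ _j : ι, Wc b c) = Wc b c ^ Fintype.card ι := by
    rw [Finset.prod_const, Finset.card_univ]
  exact le_of_le_of_eq hstep h2

lemma summable_pi {ι : Type*} [Fintype ι] (hb : 2 ≤ b) (hc : 1 < c) :
    Summable (fun κ : ι → ℕ => ∏ j, wfn' b c (κ j)) :=
  summable_of_sum_le (fun κ => Finset.prod_nonneg fun j _ => wfn'_nonneg hb _)
    (fun s => sum_pi_le hb hc s)

end Analytic

/-- Key lemma: the average over `q̃ ∈ R_{b,m}` of the weighted sum over `k ≥ 1` with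
`p ∣ S + tr_m(k) q̃` is at most `Wc b c` (before dividing by `b^m - 1`). -/
lemma sum_qt_le {b : ℕ} [Fact (Nat.Prime b)] {m : ℕ} {c : ℝ} (hc : 1 < c)
    {p : Polynomial (ZMod b)} (hp : Irreducible p) (hdeg : p.degree = (m : WithBot ℕ))
    (S : Polynomial (ZMod b)) (s₂ : Finset ℕ) :
    ∑ qt ∈ Rfin b m, ∑ k ∈ s₂,
        (if 1 ≤ k ∧ p ∣ S + trunc b m k * qt then wfn b c k else 0) ≤ Wc b c := by
  classical
  have hb2 : 2 ≤ b := (Fact.out (p := Nat.Prime b)).two_le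
  rw [Finset.sum_comm]
  by_cases hS : p ∣ S
  · have hpt : ∀ k ∈ s₂,
        (∑ qt ∈ Rfin b m, if 1 ≤ k ∧ p ∣ S + trunc b m k * qt then wfn b c k else 0)
          ≤ (if 1 ≤ k ∧ b ^ m ∣ k then ((b ^ m - 1 : ℕ) : ℝ) * wfn b c k else 0) := by
      intro k _
      by_cases hk1 : 1 ≤ k
      · by_cases hkd : b ^ m ∣ k
        · rw [if_pos ⟨hk1, hkd⟩]
          calc ∑ qt ∈ Rfin b m, (if 1 ≤ k ∧ p ∣ S + trunc b m k * qt then wfn b c k else 0)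
              ≤ ∑ _qt ∈ Rfin b m, wfn b c k := Finset.sum_le_sum fun qt _ => by
                split
                · exact le_rfl
                · exact wfn_nonneg hb2 k
          _ = ((Rfin b m).card : ℝ) * wfn b c k := by rw [Finset.sum_const, nsmul_eq_mul]
          _ ≤ ((b ^ m - 1 : ℕ) : ℝ) * wfn b c k := by
                refine mul_le_mul_of_nonneg_right ?_ (wfn_nonneg hb2 k)
                exact_mod_cast card_Rfin_le b m
        · rw [if_neg (by tauto)]
          have ht : trunc b m k ≠ 0 := fun h => hkd ((trunc_eq_zero_iff hb2 m k).mp h)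
          have hcount := count_filter_le hp hdeg S (trunc b m k) ht (degree_trunc_lt b m k)
          rw [if_pos hS, Nat.le_zero, Finset.card_eq_zero, Finset.filter_eq_empty_iff] at hcount
          refine le_of_eq (Finset.sum_eq_zero fun qt hqt => if_neg ?_)
          rintro ⟨-, hdvd⟩
          exact hcount hqt hdvd
      · rw [if_neg (by tauto)]
        exact le_of_eq (Finset.sum_eq_zero fun qt _ => if_neg (by tauto))
    refine le_trans (Finset.sum_le_sum hpt) ?_
    have heq : ∑ k ∈ s₂, (if 1 ≤ k ∧ b ^ m ∣ k then ((b ^ m - 1 : ℕ) : ℝ) * wfn b c k else 0)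
        = ((b ^ m - 1 : ℕ) : ℝ) * ∑ k ∈ s₂.filter (fun k => 1 ≤ k ∧ b ^ m ∣ k), wfn b c k := by
      rw [Finset.sum_filter, Finset.mul_sum]
      exact Finset.sum_congr rfl fun k _ => by
        split
        · rfl
        · rw [mul_zero]
    rw [heq]
    refine le_trans (mul_le_mul_of_nonneg_left (sum_mult_le hb2 hc m s₂)
      (Nat.cast_nonneg _)) ?_
    exact mult_const_le hb2 hc m
  · have hpt : ∀ k ∈ s₂,
        (∑ qt ∈ Rfin b m, if 1 ≤ k ∧ p ∣ S + trunc b m k * qt then wfn b c k else 0)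
          ≤ wfn' b c k := by
      intro k _
      by_cases hk1 : 1 ≤ k
      · rw [wfn', if_pos hk1]
        by_cases hkd : b ^ m ∣ k
        · have ht0 : trunc b m k = 0 := (trunc_eq_zero_iff hb2 m k).mpr hkd
          refine le_trans (le_of_eq (Finset.sum_eq_zero fun qt _ => if_neg ?_))
            (wfn_nonneg hb2 k)
          rintro ⟨-, hdvd⟩
          rw [ht0, zero_mul, add_zero] at hdvd
          exact hS hdvd
        · have ht : trunc b m k ≠ 0 := fun h => hkd ((trunc_eq_zero_iff hb2 m k).mp h)
          have hcount := count_filter_le hp hdeg S (trunc b m k) ht (degree_trunc_lt b m k)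
          rw [if_neg hS] at hcount
          have heq2 : ∑ qt ∈ Rfin b m, (if 1 ≤ k ∧ p ∣ S + trunc b m k * qt then wfn b c k else 0)
              = (((Rfin b m).filter (fun qt => p ∣ S + trunc b m k * qt)).card : ℝ)
                  * wfn b c k := by
            rw [← Finset.sum_filter]
            have hsame : (Rfin b m).filter (fun qt => 1 ≤ k ∧ p ∣ S + trunc b m k * qt)
                = (Rfin b m).filter (fun qt => p ∣ S + trunc b m k * qt) := by
              exact Finset.filter_congr fun qt _ => by simp [hk1]
            rw [hsame, Finset.sum_const, nsmul_eq_mul]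
          rw [heq2]
          calc (((Rfin b m).filter (fun qt => p ∣ S + trunc b m k * qt)).card : ℝ) * wfn b c k
              ≤ 1 * wfn b c k := by
                refine mul_le_mul_of_nonneg_right ?_ (wfn_nonneg hb2 k)
                exact_mod_cast hcount
          _ = wfn b c k := one_mul _
      · rw [wfn', if_neg hk1]
        exact le_of_eq (Finset.sum_eq_zero fun qt _ => if_neg (by tauto))
    exact le_trans (Finset.sum_le_sum hpt) (sum_wfn'_le hb2 hc s₂)

end Aux

set_option maxHeartbeats 2000000 in
theorem statement9 (b : ℕ) (hb : Nat.Prime b) (m : ℕ) (hm : 1 ≤ m)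
    (p : Polynomial (ZMod b)) (hp : Irreducible p) (hdeg : p.degree = (m : WithBot ℕ))
    (a : ℕ) (ha : 1 ≤ a)
    (lam : ℝ) (hlam1 : 1 / (2 * (a : ℝ) + 1) < lam) (hlam2 : lam ≤ 1)
    (u : Finset ℕ) (Q : ℕ → Polynomial (ZMod b)) :
    (1 / ((b : ℝ) ^ m - 1)) * ∑ qt ∈ Rfin b m,
        ∑' kk : (↥u → ℕ) × ℕ,
          (if (∀ j, 1 ≤ kk.1 j) ∧ 1 ≤ kk.2 ∧
              p ∣ ((∑ j, trunc b m (kk.1 j) * Q (j : ℕ)) + trunc b m kk.2 * qt)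
           then (∏ j, (b : ℝ) ^ (-((2 * (a : ℝ) + 1) * lam * (Nat.log b (kk.1 j) : ℝ)))) *
              (b : ℝ) ^ (-((2 * (a : ℝ) + 1) * lam * (Nat.log b kk.2 : ℝ)))
           else 0) ≤
      (((b : ℝ) - 1) / (((b : ℝ) ^ m - 1) * (1 - (b : ℝ) ^ ((1 : ℝ) - (2 * (a : ℝ) + 1) * lam)))) *
        (((b : ℝ) - 1) / (1 - (b : ℝ) ^ ((1 : ℝ) - (2 * (a : ℝ) + 1) * lam))) ^ u.card := by
  classical
  haveI : Fact (Nat.Prime b) := ⟨hb⟩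
  have hb2 : 2 ≤ b := hb.two_le
  set c : ℝ := (2 * (a : ℝ) + 1) * lam with hcdef
  have hapos : (0 : ℝ) < 2 * (a : ℝ) + 1 := by positivity
  have hc : 1 < c := by
    rw [hcdef]
    rw [div_lt_iff₀ hapos] at hlam1
    nlinarith
  have hWpos : 0 < Wc b c := Wc_pos hb2 hc
  -- the summand in product form
  have hsummand : ∀ (qt : Polynomial (ZMod b)) (kk : (↥u → ℕ) × ℕ),
      (if (∀ j, 1 ≤ kk.1 j) ∧ 1 ≤ kk.2 ∧
          p ∣ ((∑ j, trunc b m (kk.1 j) * Q (j : ℕ)) + trunc b m kk.2 * qt)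
        then (∏ j, (b : ℝ) ^ (-(c * (Nat.log b (kk.1 j) : ℝ)))) *
            (b : ℝ) ^ (-(c * (Nat.log b kk.2 : ℝ)))
        else 0)
      = (∏ j, wfn' b c (kk.1 j)) *
        (if 1 ≤ kk.2 ∧ p ∣ ((∑ j, trunc b m (kk.1 j) * Q (j : ℕ)) + trunc b m kk.2 * qt)
          then wfn b c kk.2 else 0) := by
    intro qt kk
    by_cases hk : ∀ j, 1 ≤ kk.1 j
    · have hprod : (∏ j, wfn' b c (kk.1 j))
          = ∏ j, (b : ℝ) ^ (-(c * (Nat.log b (kk.1 j) : ℝ))) :=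
        Finset.prod_congr rfl fun j _ => by rw [wfn', if_pos (hk j), wfn]
      rw [hprod]
      by_cases hrest : 1 ≤ kk.2 ∧
          p ∣ ((∑ j, trunc b m (kk.1 j) * Q (j : ℕ)) + trunc b m kk.2 * qt)
      · rw [if_pos ⟨hk, hrest.1, hrest.2⟩, if_pos hrest, wfn]
      · rw [if_neg (fun h => hrest ⟨h.2.1, h.2.2⟩), if_neg hrest, mul_zero]
    · push_neg at hk
      obtain ⟨j0, hj0⟩ := hk
      rw [if_neg (fun h => absurd (h.1 j0) (by omega))]
      rw [Finset.prod_eq_zero (Finset.mem_univ j0)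
        (by rw [wfn', if_neg (by omega)]), zero_mul]
  -- summability of the summand, for each fixed qt
  have hMsum : Summable (fun kk : (↥u → ℕ) × ℕ =>
      (∏ j, wfn' b c (kk.1 j)) * wfn' b c kk.2) :=
    Summable.mul_of_nonneg (summable_pi hb2 hc) (summable_wfn' hb2 hc)
      (fun k => Finset.prod_nonneg fun j _ => wfn'_nonneg hb2 _)
      (fun k => wfn'_nonneg hb2 k)
  have hfsum : ∀ qt : Polynomial (ZMod b), Summable (fun kk : (↥u → ℕ) × ℕ =>
      (if (∀ j, 1 ≤ kk.1 j) ∧ 1 ≤ kk.2 ∧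
          p ∣ ((∑ j, trunc b m (kk.1 j) * Q (j : ℕ)) + trunc b m kk.2 * qt)
        then (∏ j, (b : ℝ) ^ (-(c * (Nat.log b (kk.1 j) : ℝ)))) *
            (b : ℝ) ^ (-(c * (Nat.log b kk.2 : ℝ)))
        else 0)) := by
    intro qt
    refine Summable.of_nonneg_of_le (fun kk => ?_) (fun kk => ?_) hMsum
    · split
      · exact mul_nonneg (Finset.prod_nonneg fun j _ =>
          Real.rpow_nonneg (by positivity) _) (Real.rpow_nonneg (by positivity) _)
      · exact le_rfl
    · rw [hsummand qt kk]
      refine mul_le_mul_of_nonneg_left ?_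
        (Finset.prod_nonneg fun j _ => wfn'_nonneg hb2 _)
      split
      · rename_i h
        rw [wfn', if_pos h.1]
      · exact wfn'_nonneg hb2 _
  -- the key bound on the double sum
  have key : (∑ qt ∈ Rfin b m, ∑' kk : (↥u → ℕ) × ℕ,
      (if (∀ j, 1 ≤ kk.1 j) ∧ 1 ≤ kk.2 ∧
          p ∣ ((∑ j, trunc b m (kk.1 j) * Q (j : ℕ)) + trunc b m kk.2 * qt)
        then (∏ j, (b : ℝ) ^ (-(c * (Nat.log b (kk.1 j) : ℝ)))) *
            (b : ℝ) ^ (-(c * (Nat.log b kk.2 : ℝ)))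
        else 0)) ≤ Wc b c ^ u.card * Wc b c := by
    rw [← Summable.tsum_finsetSum (fun qt _ => hfsum qt)]
    refine tsum_le_of_sum_le' (mul_nonneg (pow_nonneg hWpos.le _) hWpos.le) ?_
    intro sfin
    have hnn : ∀ kk : (↥u → ℕ) × ℕ, ∀ qt ∈ Rfin b m,
        (0:ℝ) ≤ (if (∀ j, 1 ≤ kk.1 j) ∧ 1 ≤ kk.2 ∧
            p ∣ ((∑ j, trunc b m (kk.1 j) * Q (j : ℕ)) + trunc b m kk.2 * qt)
          then (∏ j, (b : ℝ) ^ (-(c * (Nat.log b (kk.1 j) : ℝ)))) *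
              (b : ℝ) ^ (-(c * (Nat.log b kk.2 : ℝ)))
          else 0) := by
      intro kk qt _
      split
      · exact mul_nonneg (Finset.prod_nonneg fun j _ =>
          Real.rpow_nonneg (by positivity) _) (Real.rpow_nonneg (by positivity) _)
      · exact le_rfl
    have hsub : sfin ⊆ (sfin.image Prod.fst) ×ˢ (sfin.image Prod.snd) := by
      intro kk hkk
      exact Finset.mem_product.mpr
        ⟨Finset.mem_image_of_mem _ hkk, Finset.mem_image_of_mem _ hkk⟩
    refine le_trans (Finset.sum_le_sum_of_subset_of_nonneg hsub
      (fun kk _ _ => Finset.sum_nonneg (hnn kk))) ?_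
    rw [Finset.sum_product]
    have inner : ∀ κ ∈ sfin.image Prod.fst,
        (∑ k ∈ sfin.image Prod.snd, ∑ qt ∈ Rfin b m,
          (if (∀ j, 1 ≤ κ j) ∧ 1 ≤ k ∧
              p ∣ ((∑ j, trunc b m (κ j) * Q (j : ℕ)) + trunc b m k * qt)
            then (∏ j, (b : ℝ) ^ (-(c * (Nat.log b (κ j) : ℝ)))) *
                (b : ℝ) ^ (-(c * (Nat.log b k : ℝ)))
            else 0))
          ≤ (∏ j, wfn' b c (κ j)) * Wc b c := by
      intro κ _
      have hre : (∑ k ∈ sfin.image Prod.snd, ∑ qt ∈ Rfin b m,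
          (if (∀ j, 1 ≤ κ j) ∧ 1 ≤ k ∧
              p ∣ ((∑ j, trunc b m (κ j) * Q (j : ℕ)) + trunc b m k * qt)
            then (∏ j, (b : ℝ) ^ (-(c * (Nat.log b (κ j) : ℝ)))) *
                (b : ℝ) ^ (-(c * (Nat.log b k : ℝ)))
            else 0))
          = (∏ j, wfn' b c (κ j)) * ∑ qt ∈ Rfin b m, ∑ k ∈ sfin.image Prod.snd,
              (if 1 ≤ k ∧
                  p ∣ ((∑ j, trunc b m (κ j) * Q (j : ℕ)) + trunc b m k * qt)
                then wfn b c k else 0) := by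
        rw [Finset.sum_comm]
        rw [Finset.mul_sum]
        refine Finset.sum_congr rfl fun qt _ => ?_
        rw [Finset.mul_sum]
        exact Finset.sum_congr rfl fun k _ => hsummand qt (κ, k)
      rw [hre]
      exact mul_le_mul_of_nonneg_left (sum_qt_le hc hp hdeg _ _)
        (Finset.prod_nonneg fun j _ => wfn'_nonneg hb2 _)
    refine le_trans (Finset.sum_le_sum inner) ?_
    rw [← Finset.sum_mul]
    refine mul_le_mul_of_nonneg_right ?_ hWpos.le
    have hpi := sum_pi_le (ι := ↥u) hb2 hc (sfin.image Prod.fst)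
    rwa [Fintype.card_coe] at hpi
  -- final arithmetic
  have hbm : (1 : ℝ) < (b : ℝ) ^ m := by
    calc (1 : ℝ) < (b : ℝ) := bR_one_lt hb2
    _ = (b : ℝ) ^ 1 := (pow_one _).symm
    _ ≤ (b : ℝ) ^ m := pow_le_pow_right₀ (bR_one_lt hb2).le hm
  have hbm1 : (0 : ℝ) < (b : ℝ) ^ m - 1 := by linarith
  have hden := denom_pos hb2 hc
  have hRHS : (((b : ℝ) - 1) / (((b : ℝ) ^ m - 1) * (1 - (b : ℝ) ^ ((1 : ℝ) - c)))) *
      (((b : ℝ) - 1) / (1 - (b : ℝ) ^ ((1 : ℝ) - c))) ^ u.card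
      = (1 / ((b : ℝ) ^ m - 1)) * (Wc b c ^ u.card * Wc b c) := by
    rw [Wc]
    field_simp
  rw [hRHS]
  exact mul_le_mul_of_nonneg_left key (by positivity)

end ISPLR
end
end

section
/- Let b be a prime, m, s, d ∈ ℕ, p ∈ F_b[x] with deg(p) = m, q ∈ (F_b[x])^{ds}, and let α, α' be integers with 1 ≤ α ≤ α' ≤ d. Let γ = (γ_w) be nonnegative weights and define weights γ' = (γ'_w) by 4^{|w|(d-α')} γ'_w = (4^{|w|(d-α)} γ_w)^{(1+2α')/(1+2α)} for all finite w. Then B_{α',d,γ'}(q, p) ≤ B_{α,d,γ}(q, p)^{(1+2α')/(1+2α)}. -/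
open scoped Classical
open Polynomial

noncomputable section

namespace ISPLR

private lemma add_rpow_le {x y p : ℝ} (hx : 0 ≤ x) (hy : 0 ≤ y) (hp : 1 ≤ p) :
    x ^ p + y ^ p ≤ (x + y) ^ p := by
  lift x to NNReal using hx
  lift y to NNReal using hy
  have := NNReal.add_rpow_le_rpow_add x y hp
  rw [← NNReal.coe_add, ← NNReal.coe_rpow, ← NNReal.coe_rpow, ← NNReal.coe_rpow,
    ← NNReal.coe_add]
  exact_mod_cast this

private lemma sum_rpow_le {ι : Type*} (S : Finset ι) (g : ι → ℝ) (hg : ∀ i ∈ S, 0 ≤ g i)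
    {lam : ℝ} (hlam : 1 ≤ lam) : ∑ i ∈ S, g i ^ lam ≤ (∑ i ∈ S, g i) ^ lam := by
  induction S using Finset.cons_induction with
  | empty => simp [Real.zero_rpow (by linarith : lam ≠ 0)]
  | cons a s ha ih =>
    rw [Finset.sum_cons, Finset.sum_cons]
    have h1 : 0 ≤ g a := hg a (Finset.mem_cons_self a s)
    have h2 : ∀ i ∈ s, 0 ≤ g i := fun i hi => hg i (Finset.mem_cons_of_mem hi)
    calc g a ^ lam + ∑ i ∈ s, g i ^ lam
        ≤ g a ^ lam + (∑ i ∈ s, g i) ^ lam := by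
          exact add_le_add le_rfl (ih h2)
      _ ≤ (g a + ∑ i ∈ s, g i) ^ lam :=
          add_rpow_le h1 (Finset.sum_nonneg h2) hlam

private lemma tsum_rpow_le {ι : Type*} (f : ι → ℝ) (hf0 : ∀ i, 0 ≤ f i) (hf : Summable f)
    {lam : ℝ} (hlam : 1 ≤ lam) : ∑' i, f i ^ lam ≤ (∑' i, f i) ^ lam := by
  refine tsum_le_of_sum_le' (Real.rpow_nonneg (tsum_nonneg hf0) _) fun S => ?_
  calc ∑ i ∈ S, f i ^ lam ≤ (∑ i ∈ S, f i) ^ lam := sum_rpow_le S f (fun i _ => hf0 i) hlam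
    _ ≤ (∑' i, f i) ^ lam := Real.rpow_le_rpow (Finset.sum_nonneg fun i _ => hf0 i)
        (Summable.sum_le_tsum S (fun i _ => hf0 i) hf) (by linarith)

private lemma summable_fin_prod {f : ℕ → ℝ} (hf0 : ∀ n, 0 ≤ f n) (hf : Summable f) :
    ∀ n : ℕ, Summable (fun k : Fin n → ℕ => ∏ i, f (k i)) := by
  intro n
  induction n with
  | zero =>
    exact .of_finite
  | succ n ih =>
    rw [← (Fin.consEquiv (fun _ : Fin (n+1) => ℕ)).summable_iff]
    refine ((hf.mul_of_nonneg ih (fun n => hf0 n)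
      (fun k => Finset.prod_nonneg fun i _ => hf0 _))).congr fun x => ?_
    show f x.1 * ∏ i, f (x.2 i) = ∏ i : Fin (n+1), f ((Fin.consEquiv (fun _ : Fin (n+1) => ℕ)) x i)
    rw [Fin.prod_univ_succ]
    simp

private lemma summable_pi_prod {f : ℕ → ℝ} (hf0 : ∀ n, 0 ≤ f n) (hf : Summable f)
    (ι : Type) [Fintype ι] : Summable (fun k : ι → ℕ => ∏ i, f (k i)) := by
  have e := Fintype.equivFin ι
  rw [← (Equiv.arrowCongr e (Equiv.refl ℕ)).symm.summable_iff]
  refine (summable_fin_prod hf0 hf (Fintype.card ι)).congr fun k => ?_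
  show ∏ i, f (k i) = ∏ i : ι, f ((Equiv.arrowCongr e (Equiv.refl ℕ)).symm k i)
  simp only [Equiv.arrowCongr_symm, Equiv.arrowCongr_apply, Equiv.refl_symm,
    Equiv.refl_apply, Function.comp_apply, Equiv.symm_symm]
  exact (Equiv.prod_comp e fun j => f (k j)).symm


private lemma rfun_nonneg (b α d k : ℕ) : 0 ≤ rfun b α d k := by
  unfold rfun
  split
  · norm_num
  · positivity

private lemma rfun_summable {b α d : ℕ} (hb : 2 ≤ b) (hα : 1 ≤ α) (hd : 1 ≤ d) :
    Summable (rfun b α d) := by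
  rw [← summable_nat_add_iff 1]
  have hb0 : (0:ℝ) < b := by exact_mod_cast (by omega : 0 < b)
  have hsum : Summable (fun k : ℕ => (b:ℝ)^2 * (1 / ((k:ℝ)+1) ^ 2)) := by
    apply Summable.mul_left
    have h1 := (Real.summable_one_div_nat_pow (p := 2)).mpr one_lt_two
    have h2 := (summable_nat_add_iff (f := fun n : ℕ => 1 / (n:ℝ)^2) 1).mpr h1
    refine h2.congr fun k => ?_
    push_cast
    ring
  refine Summable.of_nonneg_of_le (fun k => rfun_nonneg b α d (k+1)) (fun k => ?_) hsum
  unfold rfun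
  rw [if_neg (Nat.succ_ne_zero k)]
  have hc1 : 1 ≤ min α d := le_min hα hd
  have hnat : (k+1)^2 ≤ b^2 * b^((2*min α d+1)*mu b (k+1)) := by
    have h1 : k+1 < b^(mu b (k+1)+1) := Nat.lt_pow_succ_log_self (by omega) (k+1)
    calc (k+1)^2 ≤ (b^(mu b (k+1)+1))^2 := Nat.pow_le_pow_left (le_of_lt h1) 2
      _ = b^2 * b^(2*mu b (k+1)) := by ring
      _ ≤ b^2 * b^((2*min α d+1)*mu b (k+1)) := by
          apply Nat.mul_le_mul_left
          exact Nat.pow_le_pow_right (by omega) (by nlinarith)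
  have hreal : ((k:ℝ)+1)^2 ≤ (b:ℝ)^2 * (b:ℝ)^((2*min α d+1)*mu b (k+1)) := by
    exact_mod_cast hnat
  have hpk : (0:ℝ) < ((k:ℝ)+1)^2 := by positivity
  have hpb : (0:ℝ) < (b:ℝ)^((2*min α d+1)*mu b (k+1)) := by positivity
  rw [zpow_neg, zpow_natCast, mul_one_div, inv_eq_one_div, div_le_div_iff₀ hpb hpk]
  linarith

theorem statement12 (b : ℕ) (hb : Nat.Prime b) (m s d α α' : ℕ)
    (hm : 1 ≤ m) (hs : 1 ≤ s)
    (hα : 1 ≤ α) (hαα' : α ≤ α') (hα'd : α' ≤ d)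
    (p : Polynomial (ZMod b)) (hdeg : p.degree = (m : WithBot ℕ))
    (q : ℕ → Polynomial (ZMod b))
    (γ γ' : Finset ℕ → ℝ) (hγ : ∀ w, 0 ≤ γ w)
    (hγ' : ∀ w : Finset ℕ,
      (4 : ℝ) ^ (w.card * (d - α')) * γ' w =
        ((4 : ℝ) ^ (w.card * (d - α)) * γ w) ^ ((1 + 2 * (α' : ℝ)) / (1 + 2 * (α : ℝ)))) :
    Bcrit b α' d m γ' p (d * s) q ≤
      Bcrit b α d m γ p (d * s) q ^ ((1 + 2 * (α' : ℝ)) / (1 + 2 * (α : ℝ))) := by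
  classical
  have hb2 : 2 ≤ b := hb.two_le
  have hd1 : 1 ≤ d := le_trans (le_trans hα hαα') hα'd
  have hαd : α ≤ d := le_trans hαα' hα'd
  set lam : ℝ := (1 + 2*(α':ℝ))/(1+2*(α:ℝ)) with hlam_def
  have hden : (0:ℝ) < 1 + 2*(α:ℝ) := by positivity
  have hcast : (α:ℝ) ≤ (α':ℝ) := by exact_mod_cast hαα'
  have hlam1 : 1 ≤ lam := by
    rw [hlam_def, le_div_iff₀ hden]
    linarith
  have hlam0 : (0:ℝ) < lam := lt_of_lt_of_le one_pos hlam1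
  have hb0 : (0:ℝ) < b := by exact_mod_cast (by omega : 0 < b)
  have hr : ∀ k, rfun b α' d k = rfun b α d k ^ lam := by
    intro k
    unfold rfun
    split
    · rw [Real.one_rpow]
    · rw [← Real.rpow_intCast (b:ℝ), ← Real.rpow_intCast (b:ℝ), ← Real.rpow_mul hb0.le]
      congr 1
      rw [min_eq_left hαd, min_eq_left hα'd, hlam_def]
      push_cast
      field_simp
      ring
  have hsum : Summable (rfun b α d) := rfun_summable hb2 hα hd1
  unfold Bcrit
  refine le_trans (Finset.sum_le_sum (fun u _ => ?_)) (sum_rpow_le _ _ (fun u _ => ?_) hlam1)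
  · -- pointwise bound
    have hc := hγ' (blk d u)
    have hf0 : ∀ k : ↥u → ℕ,
        (0:ℝ) ≤ (if (∀ j, 1 ≤ k j) ∧ p ∣ ∑ j, trunc b m (k j) * q (j : ℕ)
          then ∏ j, rfun b α d (k j) else 0) := by
      intro k
      split
      · exact Finset.prod_nonneg fun j _ => rfun_nonneg _ _ _ _
      · exact le_refl 0
    have hfsum : Summable (fun k : ↥u → ℕ =>
        if (∀ j, 1 ≤ k j) ∧ p ∣ ∑ j, trunc b m (k j) * q (j : ℕ)
          then ∏ j, rfun b α d (k j) else 0) := by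
      refine Summable.of_nonneg_of_le hf0 (fun k => ?_)
        (summable_pi_prod (rfun_nonneg b α d) hsum ↥u)
      split
      · exact le_refl _
      · exact Finset.prod_nonneg fun j _ => rfun_nonneg _ _ _ _
    have hinner_eq : (∑' k : ↥u → ℕ,
          (if (∀ j, 1 ≤ k j) ∧ p ∣ ∑ j, trunc b m (k j) * q (j : ℕ)
            then ∏ j, rfun b α' d (k j) else 0))
        = ∑' k : ↥u → ℕ,
          (if (∀ j, 1 ≤ k j) ∧ p ∣ ∑ j, trunc b m (k j) * q (j : ℕ)
            then ∏ j, rfun b α d (k j) else 0) ^ lam := by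
      refine tsum_congr fun k => ?_
      split
      · calc ∏ j, rfun b α' d (k j)
            = ∏ j, rfun b α d (k j) ^ lam :=
              Finset.prod_congr rfl (fun j _ => hr (k j))
          _ = (∏ j, rfun b α d (k j)) ^ lam :=
              Real.finset_prod_rpow _ _ (fun j _ => rfun_nonneg _ _ _ _) lam
      · rw [Real.zero_rpow (ne_of_gt hlam0)]
    have hA0 : (0:ℝ) ≤ (4:ℝ) ^ ((blk d u).card * (d - α)) * γ (blk d u) :=
      mul_nonneg (by positivity) (hγ (blk d u))
    have hT0 : (0:ℝ) ≤ ∑' k : ↥u → ℕ,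
        (if (∀ j, 1 ≤ k j) ∧ p ∣ ∑ j, trunc b m (k j) * q (j : ℕ)
          then ∏ j, rfun b α d (k j) else 0) := tsum_nonneg hf0
    calc (4:ℝ) ^ ((blk d u).card * (d - α')) * γ' (blk d u) *
          ∑' k : ↥u → ℕ,
            (if (∀ j, 1 ≤ k j) ∧ p ∣ ∑ j, trunc b m (k j) * q (j : ℕ)
              then ∏ j, rfun b α' d (k j) else 0)
        = ((4:ℝ) ^ ((blk d u).card * (d - α)) * γ (blk d u)) ^ lam *
          ∑' k : ↥u → ℕ,
            (if (∀ j, 1 ≤ k j) ∧ p ∣ ∑ j, trunc b m (k j) * q (j : ℕ)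
              then ∏ j, rfun b α' d (k j) else 0) := by rw [hc]
      _ ≤ ((4:ℝ) ^ ((blk d u).card * (d - α)) * γ (blk d u)) ^ lam *
          (∑' k : ↥u → ℕ,
            (if (∀ j, 1 ≤ k j) ∧ p ∣ ∑ j, trunc b m (k j) * q (j : ℕ)
              then ∏ j, rfun b α d (k j) else 0)) ^ lam := by
          refine mul_le_mul_of_nonneg_left ?_ (Real.rpow_nonneg hA0 lam)
          rw [hinner_eq]
          exact tsum_rpow_le _ hf0 hfsum hlam1
      _ = ((4:ℝ) ^ ((blk d u).card * (d - α)) * γ (blk d u) *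
          ∑' k : ↥u → ℕ,
            (if (∀ j, 1 ≤ k j) ∧ p ∣ ∑ j, trunc b m (k j) * q (j : ℕ)
              then ∏ j, rfun b α d (k j) else 0)) ^ lam :=
          (Real.mul_rpow hA0 hT0).symm
  · -- nonnegativity of α-terms
    refine mul_nonneg (mul_nonneg (by positivity) (hγ (blk d u))) (tsum_nonneg fun k => ?_)
    split
    · exact Finset.prod_nonneg fun j _ => rfun_nonneg _ _ _ _
    · exact le_refl 0

end ISPLR
end
end
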